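/- For any labelled Markov chain (X,L,τ,l), any formula φ of the logic L, and any states x,y ∈ X, the judgment x ⊢_ε y is derivable in the derivation system, where ε = |⟦φ⟧(x) − ⟦φ⟧(y)|. -/
import Mathlib


/-- A finitely supported, rational-valued probability distribution on `X`. -/
structure FinDist (X : Type*) where
  p : X → ℝ
  nonneg : ∀ x, 0 ≤ p x
  rat : ∀ x, ∃ q : ℚ, (q : ℝ) = p x
  supp : Finset X
  mem_supp : ∀ x, x ∈ supp ↔ p x ≠ 0
  sum_one : ∑ x ∈ supp, p x = 1

/-- A labelled Markov chain with states `X` and labels `L`. -/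
structure LMC (X : Type*) (L : Type*) where
  τ : X → FinDist X
  label : X → L

/-- Expectation `μ ⊨ h = ∑ x, μ(x)·h(x)`. -/
noncomputable def expv {X : Type*} (μ : FinDist X) (h : X → ℝ) : ℝ :=
  ∑ z ∈ μ.supp, μ.p z * h z

/-- The derivation system for lower bounds on behavioural distances. -/
inductive Deriv {X L : Type*} [DecidableEq X] (M : LMC X L) : X → ℚ → X → Prop where
  | zero (x y : X) : Deriv M x 0 y
  | lab (x y : X) : M.label x ≠ M.label y → Deriv M x 1 y
  | symm {x y : X} {ε : ℚ} : Deriv M y ε x → Deriv M x ε y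
  | weak {x y : X} {ε ε' : ℚ} : Deriv M x ε' y → 0 ≤ ε → ε ≤ ε' → Deriv M x ε y
  | exp {x y : X} {ε : ℚ} (h : X → ℚ) :
      0 ≤ ε →
      (∀ z ∈ (M.τ x).supp ∪ (M.τ y).supp, 0 ≤ h z ∧ h z ≤ 1) →
      (∀ x' ∈ (M.τ x).supp ∪ (M.τ y).supp, ∀ y' ∈ (M.τ x).supp ∪ (M.τ y).supp,
        h y' < h x' → Deriv M x' (h x' - h y') y') →
      (ε : ℝ) ≤ expv (M.τ x) (fun z => ((h z : ℚ) : ℝ))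
              - expv (M.τ y) (fun z => ((h z : ℚ) : ℝ)) →
      Deriv M x ε y

/-- Formulas of the logic `𝓛`. -/
inductive Formula (L : Type*) where
  | atom : L → Formula L
  | next : Formula L → Formula L
  | neg : Formula L → Formula L
  | sub : Formula L → {q : ℚ // 0 ≤ q ∧ q ≤ 1} → Formula L
  | or : Formula L → Formula L → Formula L

/-- Quantitative semantics of the logic. -/
noncomputable def interp {X L : Type*} [DecidableEq L] (M : LMC X L) : Formula L → X → ℝ
  | .atom a, x => if M.label x = a then 1 else 0
  | .next φ, x => expv (M.τ x) (interp M φ)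
  | .neg φ, x => 1 - interp M φ x
  | .sub φ q, x => max 0 (interp M φ x - (q.1 : ℝ))
  | .or φ ψ, x => max (interp M φ x) (interp M ψ x)

lemma interp_mem {X L : Type*} [DecidableEq L] (M : LMC X L) (φ : Formula L) (x : X) :
    0 ≤ interp M φ x ∧ interp M φ x ≤ 1 := by
  induction φ generalizing x with
  | atom a => simp only [interp]; split <;> norm_num
  | next φ ih =>
    constructor
    · exact Finset.sum_nonneg fun z _ => mul_nonneg ((M.τ x).nonneg z) (ih z).1
    · calc ∑ z ∈ (M.τ x).supp, (M.τ x).p z * interp M φ z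
          ≤ ∑ z ∈ (M.τ x).supp, (M.τ x).p z * 1 :=
            Finset.sum_le_sum fun z _ =>
              mul_le_mul_of_nonneg_left (ih z).2 ((M.τ x).nonneg z)
        _ = 1 := by simp [(M.τ x).sum_one]
  | neg φ ih =>
    have := ih x; simp only [interp]; constructor <;> linarith [this.1, this.2]
  | sub φ q ih =>
    have := ih x
    have hq := q.2
    simp only [interp]
    constructor
    · exact le_max_left _ _
    · apply max_le (by norm_num)
      have hq0 : (0:ℝ) ≤ (q.1 : ℝ) := by exact_mod_cast hq.1
      linarith [this.2]
  | or φ ψ ih1 ih2 =>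
    have h1 := ih1 x; have h2 := ih2 x
    simp only [interp]
    exact ⟨le_max_of_le_left h1.1, max_le h1.2 h2.2⟩

lemma interp_rat {X L : Type*} [DecidableEq L] (M : LMC X L) (φ : Formula L) (x : X) :
    ∃ q : ℚ, (q : ℝ) = interp M φ x := by
  induction φ generalizing x with
  | atom a =>
    simp only [interp]; split
    · exact ⟨1, by norm_num⟩
    · exact ⟨0, by norm_num⟩
  | next φ ih =>
    choose h hh using fun z => ih z
    choose p hp using (M.τ x).rat
    refine ⟨∑ z ∈ (M.τ x).supp, p z * h z, ?_⟩
    push_cast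
    exact Finset.sum_congr rfl fun z _ => by rw [hp, hh]
  | neg φ ih =>
    obtain ⟨q, hq⟩ := ih x
    exact ⟨1 - q, by push_cast [interp]; rw [hq]⟩
  | sub φ q0 ih =>
    obtain ⟨q, hq⟩ := ih x
    refine ⟨max 0 (q - q0.1), ?_⟩
    push_cast [interp]
    rw [hq]
  | or φ ψ ih1 ih2 =>
    obtain ⟨q1, hq1⟩ := ih1 x
    obtain ⟨q2, hq2⟩ := ih2 x
    refine ⟨max q1 q2, ?_⟩
    push_cast [interp]
    rw [hq1, hq2]

lemma next_aux {X L : Type*} [DecidableEq X] [DecidableEq L]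
    (M : LMC X L) (φ : Formula L)
    (IH : ∀ x y : X, ∃ ε : ℚ, (ε : ℝ) = |interp M φ x - interp M φ y| ∧ Deriv M x ε y)
    (x y : X) (hle : interp M (.next φ) y ≤ interp M (.next φ) x) :
    ∃ ε : ℚ, (ε : ℝ) = interp M (.next φ) x - interp M (.next φ) y ∧ Deriv M x ε y := by
  choose h hh using fun z => interp_rat M φ z
  obtain ⟨qx, hqx⟩ := interp_rat M (.next φ) x
  obtain ⟨qy, hqy⟩ := interp_rat M (.next φ) y
  have hexp : ∀ w : X, expv (M.τ w) (fun z => ((h z : ℚ) : ℝ)) = interp M (.next φ) w := by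
    intro w
    simp only [interp, expv]
    exact Finset.sum_congr rfl fun z _ => by rw [hh]
  refine ⟨qx - qy, by push_cast; rw [hqx, hqy], ?_⟩
  apply Deriv.exp h
  · have : ((qx - qy : ℚ) : ℝ) = interp M (.next φ) x - interp M (.next φ) y := by
      push_cast; rw [hqx, hqy]
    have h0 : (0:ℝ) ≤ ((qx - qy : ℚ) : ℝ) := by rw [this]; linarith
    exact_mod_cast h0
  · intro z _
    have hm := interp_mem M φ z
    constructor
    · have : (0:ℝ) ≤ ((h z : ℚ) : ℝ) := by rw [hh]; exact hm.1
      exact_mod_cast this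
    · have : ((h z : ℚ) : ℝ) ≤ 1 := by rw [hh]; exact hm.2
      exact_mod_cast this
  · intro x' _ y' _ hlt
    obtain ⟨ε', hε', hd⟩ := IH x' y'
    have hlt' : interp M φ y' < interp M φ x' := by
      rw [← hh, ← hh]; exact_mod_cast hlt
    have : (ε' : ℝ) = ((h x' - h y' : ℚ) : ℝ) := by
      rw [hε', abs_of_pos (by linarith)]
      push_cast; rw [hh, hh]
    have heq : ε' = h x' - h y' := by exact_mod_cast this
    rwa [← heq]
  · rw [hexp, hexp]
    push_cast
    rw [hqx, hqy]

/-- For every formula `φ`, the difference of interpretations is a derivable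
lower bound. -/
theorem formula_to_proof {X L : Type*} [DecidableEq X] [DecidableEq L] [Nonempty L]
    (M : LMC X L) (φ : Formula L) (x y : X) :
    ∃ ε : ℚ, (ε : ℝ) = |interp M φ x - interp M φ y| ∧ Deriv M x ε y := by
  induction φ generalizing x y with
  | atom a =>
    by_cases hv : interp M (.atom a) x = interp M (.atom a) y
    · exact ⟨0, by rw [hv]; simp, Deriv.zero x y⟩
    · have hl : M.label x ≠ M.label y := by
        intro hl; apply hv; simp only [interp, hl]
      refine ⟨1, ?_, Deriv.lab x y hl⟩
      simp only [interp] at hv ⊢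
      rcases eq_or_ne (M.label x) a with h1 | h1 <;>
        rcases eq_or_ne (M.label y) a with h2 | h2
      · exact (hl (h1.trans h2.symm)).elim
      · simp [h1, h2]
      · simp [h1, h2]
      · simp [h1, h2] at hv
  | next φ ih =>
    rcases le_total (interp M (.next φ) y) (interp M (.next φ) x) with hle | hle
    · obtain ⟨ε, hε, hd⟩ := next_aux M φ ih x y hle
      exact ⟨ε, by rw [hε, abs_of_nonneg (by linarith)], hd⟩
    · obtain ⟨ε, hε, hd⟩ := next_aux M φ ih y x hle
      refine ⟨ε, ?_, Deriv.symm hd⟩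
      rw [hε, abs_sub_comm, abs_of_nonneg (by linarith)]
  | neg φ ih =>
    obtain ⟨ε, hε, hd⟩ := ih x y
    refine ⟨ε, ?_, hd⟩
    simp only [interp]
    rw [show (1 - interp M φ x) - (1 - interp M φ y) = -(interp M φ x - interp M φ y) by ring,
      abs_neg]
    exact hε
  | sub φ q ih =>
    obtain ⟨ε', hε', hd⟩ := ih x y
    obtain ⟨qx, hqx⟩ := interp_rat M (.sub φ q) x
    obtain ⟨qy, hqy⟩ := interp_rat M (.sub φ q) y
    refine ⟨|qx - qy|, by push_cast; rw [hqx, hqy], ?_⟩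
    apply Deriv.weak hd (abs_nonneg _)
    have hle : (|qx - qy| : ℝ) ≤ (ε' : ℝ) := by
      push_cast
      rw [hqx, hqy, hε']
      simp only [interp]
      calc |max 0 (interp M φ x - q.1) - max 0 (interp M φ y - q.1)|
          = |max (interp M φ x - q.1) 0 - max (interp M φ y - q.1) 0| := by
            rw [max_comm, max_comm (interp M φ y - _)]
        _ ≤ |(interp M φ x - q.1) - (interp M φ y - q.1)| := abs_max_sub_max_le_abs _ _ _
        _ = |interp M φ x - interp M φ y| := by congr 1; ring
    exact_mod_cast hle
  | or φ ψ ih1 ih2 =>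
    obtain ⟨ε1, hε1, hd1⟩ := ih1 x y
    obtain ⟨ε2, hε2, hd2⟩ := ih2 x y
    obtain ⟨qx, hqx⟩ := interp_rat M (.or φ ψ) x
    obtain ⟨qy, hqy⟩ := interp_rat M (.or φ ψ) y
    refine ⟨|qx - qy|, by push_cast; rw [hqx, hqy], ?_⟩
    have hle : (|qx - qy| : ℝ) ≤ max (ε1 : ℝ) (ε2 : ℝ) := by
      push_cast
      rw [hqx, hqy, hε1, hε2]
      simp only [interp]
      exact abs_max_sub_max_le_max _ _ _ _
    have hle' : |qx - qy| ≤ max ε1 ε2 := by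
      have : ((max ε1 ε2 : ℚ) : ℝ) = max (ε1 : ℝ) (ε2 : ℝ) := by push_cast; rfl
      exact_mod_cast hle.trans_eq this.symm
    rcases le_total ε1 ε2 with h | h
    · exact Deriv.weak hd2 (abs_nonneg _) (by rw [max_eq_right h] at hle'; exact hle')
    · exact Deriv.weak hd1 (abs_nonneg _) (by rw [max_eq_left h] at hle'; exact hle')
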